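/- In the optimal two-machine flow shop schedule produced by Johnson's rule, if the critical job J_ν satisfies p_{1ν} ≥ p_{2ν}, then C_max ≤ sum_{j∈J} p_{1j} + (1/2)(p_{1ν} + p_{2ν}). -/
import Mathlib


open Finset

/-- In the two-machine Johnson schedule (jobs indexed in schedule
order), if the critical job `ν` satisfies `p₁ ν ≥ p₂ ν`, then
`Cmax ≤ ∑ j, p₁ j + (p₁ ν + p₂ ν) / 2`. -/
theorem johnson_critical_job_bound
    (n : ℕ) (p1 p2 : Fin n → ℝ)
    (hp1 : ∀ j, 0 ≤ p1 j) (hp2 : ∀ j, 0 ≤ p2 j)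
    -- Johnson order: every job scheduled after a job with `p₁ ≥ p₂` also
    -- satisfies `p₁ ≥ p₂`
    (hJ : ∀ k l : Fin n, k < l → p2 k ≤ p1 k → p2 l ≤ p1 l)
    (ν : Fin n) (Cmax : ℝ)
    -- `ν` is the critical job of the Johnson schedule
    (hC : Cmax = (∑ j ∈ Finset.univ.filter (fun j => j ≤ ν), p1 j) +
                 (∑ j ∈ Finset.univ.filter (fun j => ν ≤ j), p2 j))
    (hν : p2 ν ≤ p1 ν) :
    Cmax ≤ (∑ j, p1 j) + (p1 ν + p2 ν) / 2 := by
  have hsplit : Finset.univ.filter (fun j => ν ≤ j) =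
      insert ν (Finset.univ.filter (fun j => ν < j)) := by
    ext j
    simp [Finset.mem_insert, le_iff_lt_or_eq, eq_comm, or_comm]
  have hnotmem : ν ∉ Finset.univ.filter (fun j => ν < j) := by simp
  have h2 : (∑ j ∈ Finset.univ.filter (fun j => ν ≤ j), p2 j) =
      p2 ν + ∑ j ∈ Finset.univ.filter (fun j => ν < j), p2 j := by
    rw [hsplit, Finset.sum_insert hnotmem]
  have h3 : (∑ j ∈ Finset.univ.filter (fun j => ν < j), p2 j) ≤
      ∑ j ∈ Finset.univ.filter (fun j => ν < j), p1 j := by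
    apply Finset.sum_le_sum
    intro j hj
    simp only [Finset.mem_filter] at hj
    exact hJ ν j hj.2 hν
  have h4 : (∑ j ∈ Finset.univ.filter (fun j => j ≤ ν), p1 j) +
      (∑ j ∈ Finset.univ.filter (fun j => ν < j), p1 j) = ∑ j, p1 j := by
    rw [← Finset.sum_filter_add_sum_filter_not Finset.univ (fun j => j ≤ ν) p1]
    congr 1
    apply Finset.sum_congr _ (fun _ _ => rfl)
    ext j
    simp [not_le]
  have h5 : p2 ν ≤ (p1 ν + p2 ν) / 2 := by linarith
  calc Cmax = (∑ j ∈ Finset.univ.filter (fun j => j ≤ ν), p1 j) +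
      (p2 ν + ∑ j ∈ Finset.univ.filter (fun j => ν < j), p2 j) := by rw [hC, h2]
    _ ≤ (∑ j ∈ Finset.univ.filter (fun j => j ≤ ν), p1 j) +
      (p2 ν + ∑ j ∈ Finset.univ.filter (fun j => ν < j), p1 j) := by linarith
    _ = (∑ j, p1 j) + p2 ν := by linarith [h4]
    _ ≤ (∑ j, p1 j) + (p1 ν + p2 ν) / 2 := by linarith
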